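/- Let $p > n \geq 2$ be the characteristic of $\mathbb{F}_q$, let $0 \leq i < j < n$, and let $f(X) = X^n + A X^i$ over the rational function field $\mathbb{F}_q(A)$ (with $A$ transcendental). Then $\operatorname{Res}(f^{(i)}, f^{(j)}) = \pm \big(n(n-1)\cdots(n-j+1)\big)^{n-i} (i!)^{n-j} A^{\,n-j}$; in particular, viewed as a polynomial in $A$, this resultant is nonconstant. -/

import Mathlib

open Polynomial

/-- The Sylvester matrix of two polynomials. -/
noncomputable def sylvester {R : Type*} [CommRing R] (f g : R[X]) :
    Matrix (Fin (g.natDegree + f.natDegree)) (Fin (g.natDegree + f.natDegree)) R :=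
  Matrix.of fun i j =>
    if (i : ℕ) < g.natDegree then
      (if (i : ℕ) ≤ (j : ℕ) ∧ (j : ℕ) ≤ f.natDegree + (i : ℕ) then
        f.coeff (f.natDegree + (i : ℕ) - (j : ℕ)) else 0)
    else
      (if (i : ℕ) - g.natDegree ≤ (j : ℕ) ∧ (j : ℕ) ≤ (i : ℕ) then
        g.coeff (g.natDegree + ((i : ℕ) - g.natDegree) - (j : ℕ)) else 0)

/-- The resultant of two polynomials, as the determinant of their Sylvester matrix. -/
noncomputable def resultantP {R : Type*} [CommRing R] (f g : R[X]) : R :=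
  (_root_.sylvester f g).det

/-- The discriminant of a monic polynomial. -/
noncomputable def discrP {R : Type*} [CommRing R] (f : R[X]) : R :=
  (-1 : R) ^ (f.natDegree * (f.natDegree - 1) / 2) * resultantP f (derivative f)


def rotPerm (m1 m2 : ℕ) : Equiv.Perm (Fin (m1 + m2)) :=
  (finCongr (Nat.add_comm m1 m2)).trans finAddFlip

lemma rotPerm_val (m1 m2 : ℕ) (r : Fin (m1 + m2)) :
    ((rotPerm m1 m2 r : Fin (m1 + m2)) : ℕ) =
      if (r : ℕ) < m2 then m1 + r else (r : ℕ) - m2 := by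
  have hr := r.isLt
  have hc : (finCongr (Nat.add_comm m1 m2) r) = (⟨(r : ℕ), by omega⟩ : Fin (m2 + m1)) := rfl
  rcases lt_or_ge (r : ℕ) m2 with h | h
  · rw [if_pos h]
    simp only [rotPerm, Equiv.trans_apply, hc, finAddFlip_apply_mk_left h]
  · rw [if_neg (by omega)]
    simp only [rotPerm, Equiv.trans_apply, hc, finAddFlip_apply_mk_right (m := m2) (n := m1) h (by omega)]

lemma det_aux {K : Type*} [CommRing K] (m1 m2 : ℕ) (hm2 : 0 < m2)
    (f g : K[X]) (hf : f.natDegree = m2) (hg : g.natDegree = m1)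
    (a b c : K)
    (hfc : ∀ d, f.coeff d = if d = m2 then a else if d = 0 then b else 0)
    (hgc : ∀ d, g.coeff d = if d = m1 then c else 0) :
    resultantP f g = c ^ m2 * b ^ m1 ∨ resultantP f g = -(c ^ m2 * b ^ m1) := by
  subst hf hg
  set n2 := f.natDegree with hn2
  set n1 := g.natDegree with hn1
  set M := _root_.sylvester f g with hM
  set σ := rotPerm n1 n2 with hσ
  have hσval : ∀ r : Fin (n1 + n2),
      ((σ r : Fin (n1 + n2)) : ℕ) = if (r : ℕ) < n2 then n1 + r else (r : ℕ) - n2 :=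
    rotPerm_val n1 n2
  have hdiag : ∀ r s : Fin (n1 + n2), (M.submatrix σ id) r s =
      if (s : ℕ) = (r : ℕ) then (if (r : ℕ) < n2 then c else b)
      else if (r : ℕ) ≥ n2 ∧ (s : ℕ) = (r : ℕ) - n2 then a else 0 := by
    intro r s
    have hr := r.isLt
    have hs := s.isLt
    simp only [Matrix.submatrix_apply, id_eq, hM, _root_.sylvester, Matrix.of_apply, hσval, hfc, hgc]
    split_ifs <;> first | rfl | omega
  have htri : (M.submatrix σ id).BlockTriangular OrderDual.toDual := by
    intro r s hrs
    have h2 : (r : Fin (n1+n2)) < s := hrs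
    rw [hdiag]
    rw [if_neg (by omega), if_neg (by omega)]
  have hdet2 : (M.submatrix σ id).det = c ^ n2 * b ^ n1 := by
    rw [Matrix.det_of_lowerTriangular _ htri]
    have he : ∀ r : Fin (n1 + n2), (M.submatrix σ id) r r =
        if (r : ℕ) < n2 then c else b := by
      intro r; rw [hdiag, if_pos rfl]
    rw [Finset.prod_congr rfl (fun r _ => he r)]
    rw [Fin.prod_univ_eq_prod_range (fun k => if k < n2 then c else b) (n1 + n2)]
    rw [show n1 + n2 = n2 + n1 from Nat.add_comm _ _, Finset.prod_range_add]
    have hstep : ∀ x ∈ Finset.range n2, (if x < n2 then c else b) = c :=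
      fun x hx => if_pos (Finset.mem_range.mp hx)
    have hstep2 : ∀ x ∈ Finset.range n1, (if n2 + x < n2 then c else b) = b :=
      fun x _ => if_neg (by omega)
    rw [Finset.prod_congr rfl hstep, Finset.prod_congr rfl hstep2,
      Finset.prod_const, Finset.prod_const, Finset.card_range, Finset.card_range]
  have hperm := Matrix.det_permute σ M
  rw [hdet2] at hperm
  rcases Int.units_eq_one_or (Equiv.Perm.sign σ) with h | h <;> rw [h] at hperm
  · left
    unfold resultantP
    rw [← hM]
    simpa using hperm.symm
  · right
    unfold resultantP
    rw [← hM]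
    have h2 : -M.det = c ^ n2 * b ^ n1 := by
      rw [hperm]; simp
    exact neg_eq_iff_eq_neg.mp h2

lemma cmulxpow_ne_C {F : Type*} [Field F] (u c : F) (m : ℕ) (hu : u ≠ 0) (hm : 0 < m) :
    RatFunc.C u * RatFunc.X ^ m ≠ RatFunc.C c := by
  intro heq
  have h2 : algebraMap (Polynomial F) (RatFunc F) (Polynomial.C u * Polynomial.X ^ m) =
      algebraMap (Polynomial F) (RatFunc F) (Polynomial.C c) := by
    rw [map_mul, map_pow, RatFunc.algebraMap_C, RatFunc.algebraMap_X, RatFunc.algebraMap_C, heq]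
  have h3 := RatFunc.algebraMap_injective F h2
  have h4 : (Polynomial.C u * Polynomial.X ^ m).natDegree = m := natDegree_C_mul_X_pow m u hu
  rw [h3] at h4
  simp at h4
  omega

/-- For `f = X^n + A X^i` over `𝔽_q(A)` with `p > n ≥ 2` and `0 ≤ i < j < n`, the resultant of
the `i`-th and `j`-th derivatives of `f` equals
`± (n(n-1)⋯(n-j+1))^{n-i} (i!)^{n-j} A^{n-j}`; in particular it is a nonconstant
function of `A`. -/
theorem stmt4 {F : Type*} [Field F] [Fintype F] (p n i j : ℕ) [CharP F p]
    (hn : 2 ≤ n) (hpn : n < p) (hij : i < j) (hjn : j < n)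
    (f : Polynomial (RatFunc F))
    (hfdef : f = X ^ n + C RatFunc.X * X ^ i) :
    (resultantP (derivative^[i] f) (derivative^[j] f) =
        (∏ k ∈ Finset.range j, ((n : RatFunc F) - (k : ℕ))) ^ (n - i) *
          ((i.factorial : RatFunc F)) ^ (n - j) * RatFunc.X ^ (n - j) ∨
      resultantP (derivative^[i] f) (derivative^[j] f) =
        -((∏ k ∈ Finset.range j, ((n : RatFunc F) - (k : ℕ))) ^ (n - i) *
          ((i.factorial : RatFunc F)) ^ (n - j) * RatFunc.X ^ (n - j))) ∧
    ∀ c : F, resultantP (derivative^[i] f) (derivative^[j] f) ≠ RatFunc.C c := by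
  have hp : p.Prime := CharP.char_is_prime F p
  haveI : CharP (RatFunc F) p :=
    charP_of_injective_algebraMap (algebraMap F (RatFunc F)).injective p
  -- nonzero facts
  have hdvd : ∀ m : ℕ, m.descFactorial j ∣ m.factorial ∨ True := fun _ => Or.inr trivial
  have hdesc_ne : ∀ k : ℕ, k ≤ n → ((n.descFactorial k : ℕ) : RatFunc F) ≠ 0 := by
    intro k hk
    rw [Ne, CharP.cast_eq_zero_iff (RatFunc F) p]
    intro hdvd
    have h1 : n.descFactorial k ∣ n.factorial :=
      ⟨(n - k).factorial, by rw [mul_comm, Nat.factorial_mul_descFactorial hk]⟩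
    have := (Nat.Prime.dvd_factorial hp).mp (hdvd.trans h1)
    omega
  have hfacF : ((i.factorial : ℕ) : F) ≠ 0 := by
    rw [Ne, CharP.cast_eq_zero_iff F p]
    intro hdvd
    have := (Nat.Prime.dvd_factorial hp).mp hdvd
    omega
  have hdescF : ((n.descFactorial j : ℕ) : F) ≠ 0 := by
    rw [Ne, CharP.cast_eq_zero_iff F p]
    intro hdvd
    have h1 : n.descFactorial j ∣ n.factorial :=
      ⟨(n - j).factorial, by rw [mul_comm, Nat.factorial_mul_descFactorial hjn.le]⟩
    have := (Nat.Prime.dvd_factorial hp).mp (hdvd.trans h1)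
    omega
  -- derivatives
  have hfi : derivative^[i] f =
      C ((n.descFactorial i : ℕ) : RatFunc F) * X ^ (n - i) +
        C (RatFunc.X * ((i.factorial : ℕ) : RatFunc F)) := by
    rw [hfdef]
    rw [iterate_map_add, Polynomial.iterate_derivative_X_pow_eq_C_mul,
      Polynomial.iterate_derivative_C_mul, Polynomial.iterate_derivative_X_pow_eq_C_mul]
    rw [Nat.descFactorial_self, Nat.sub_self, pow_zero, mul_one, ← C_mul, map_natCast]
  have hfj : derivative^[j] f = C ((n.descFactorial j : ℕ) : RatFunc F) * X ^ (n - j) := by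
    rw [hfdef]
    rw [iterate_map_add, Polynomial.iterate_derivative_X_pow_eq_C_mul,
      Polynomial.iterate_derivative_C_mul, Polynomial.iterate_derivative_X_pow_eq_C_mul]
    rw [Nat.descFactorial_of_lt hij, Nat.cast_zero, map_zero, zero_mul, mul_zero, add_zero,
      map_natCast]
  -- det_aux hypotheses
  have hdi : (derivative^[i] f).natDegree = n - i := by
    rw [hfi, natDegree_add_C, natDegree_C_mul_X_pow _ _ (hdesc_ne i (by omega))]
  have hdj : (derivative^[j] f).natDegree = n - j := by
    rw [hfj, natDegree_C_mul_X_pow _ _ (hdesc_ne j hjn.le)]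
  have hci : ∀ d, (derivative^[i] f).coeff d =
      if d = n - i then ((n.descFactorial i : ℕ) : RatFunc F)
      else if d = 0 then RatFunc.X * ((i.factorial : ℕ) : RatFunc F) else 0 := by
    intro d
    rw [hfi]
    simp only [coeff_add, coeff_C_mul, coeff_X_pow, coeff_C]
    have hni : n - i ≠ 0 := by omega
    split_ifs <;> first | rfl | (exfalso; omega) | ring1
  have hcj : ∀ d, (derivative^[j] f).coeff d =
      if d = n - j then ((n.descFactorial j : ℕ) : RatFunc F) else 0 := by
    intro d
    rw [hfj]
    simp only [coeff_C_mul, coeff_X_pow]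
    split_ifs <;> first | rfl | (exfalso; omega) | ring1
  have key := det_aux (n - j) (n - i) (by omega) (derivative^[i] f) (derivative^[j] f)
    hdi hdj _ _ _ hci hcj
  -- rewrite target
  have hprod : (∏ k ∈ Finset.range j, ((n : RatFunc F) - (k : ℕ))) =
      ((n.descFactorial j : ℕ) : RatFunc F) := by
    rw [Nat.descFactorial_eq_prod_range, Nat.cast_prod]
    refine Finset.prod_congr rfl fun k hk => ?_
    have hk' : k ≤ n := by
      have := Finset.mem_range.mp hk; omega
    rw [Nat.cast_sub hk']
  have htarget : (∏ k ∈ Finset.range j, ((n : RatFunc F) - (k : ℕ))) ^ (n - i) *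
        ((i.factorial : RatFunc F)) ^ (n - j) * RatFunc.X ^ (n - j) =
      ((n.descFactorial j : ℕ) : RatFunc F) ^ (n - i) *
        (RatFunc.X * ((i.factorial : ℕ) : RatFunc F)) ^ (n - j) := by
    rw [hprod, mul_pow]; ring
  constructor
  · rcases key with h | h
    · left; rw [htarget]; exact h
    · right; rw [htarget]; exact h
  · intro c
    have hC : ((n.descFactorial j : ℕ) : RatFunc F) ^ (n - i) *
          (RatFunc.X * ((i.factorial : ℕ) : RatFunc F)) ^ (n - j) =
        RatFunc.C (((n.descFactorial j : ℕ) : F) ^ (n - i) * ((i.factorial : ℕ) : F) ^ (n - j)) *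
          RatFunc.X ^ (n - j) := by
      rw [map_mul, map_pow, map_pow, map_natCast, map_natCast, mul_pow]; ring
    have hune : (((n.descFactorial j : ℕ) : F) ^ (n - i) * ((i.factorial : ℕ) : F) ^ (n - j)) ≠ 0 :=
      mul_ne_zero (pow_ne_zero _ hdescF) (pow_ne_zero _ hfacF)
    rcases key with h | h <;> rw [h]
    · rw [hC]
      exact cmulxpow_ne_C _ c _ hune (by omega)
    · rw [hC]
      rw [show -(RatFunc.C (((n.descFactorial j : ℕ) : F) ^ (n - i) *
          ((i.factorial : ℕ) : F) ^ (n - j)) * RatFunc.X ^ (n - j)) =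
        RatFunc.C (-(((n.descFactorial j : ℕ) : F) ^ (n - i) *
          ((i.factorial : ℕ) : F) ^ (n - j))) * RatFunc.X ^ (n - j) by rw [map_neg]; ring]
      exact cmulxpow_ne_C _ c _ (neg_ne_zero.mpr hune) (by omega)
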